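/- Let P ⊆ ℝ^d be a convex body, Λ₁ a full-rank lattice in a subspace V₁, and x a point with x ∈ π(P) where π is the projection along V₁ onto a complement V₂. If P + Λ₁ is convex, then the entire affine line/subspace x + V₁ is contained in P + Λ₁. -/

import Mathlib

open Pointwise

lemma span_subset_convexHull_of_addSubgroup {E : Type*} [AddCommGroup E] [Module ℝ E]
    (G : AddSubgroup E) :
    (Submodule.span ℝ (G : Set E) : Set E) ⊆ convexHull ℝ (G : Set E) := by
  set S : Set E := convexHull ℝ (G : Set E) with hS
  have hconv : Convex ℝ S := convex_convexHull ℝ _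
  have hGS : (G : Set E) ⊆ S := subset_convexHull ℝ _
  have h0 : (0 : E) ∈ S := hGS G.zero_mem
  have haddG : (G : Set E) + (G : Set E) = (G : Set E) := by
    ext g
    constructor
    · rintro ⟨a, ha, b, hb, rfl⟩; exact G.add_mem ha hb
    · intro hg; exact ⟨g, hg, 0, G.zero_mem, by simp⟩
  have hadd : ∀ a ∈ S, ∀ b ∈ S, a + b ∈ S := by
    intro a ha b hb
    have : S + S = S := by rw [hS, ← convexHull_add, haddG]
    rw [← this]
    exact Set.add_mem_add ha hb
  have hneg : ∀ a ∈ S, -a ∈ S := by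
    intro a ha
    have : -(G : Set E) = (G : Set E) := by
      ext g; simp [AddSubgroup.neg_mem_iff]
    rw [hS, ← this, convexHull_neg]
    exact Set.neg_mem_neg.2 ha
  have hnsmul : ∀ (n : ℕ), ∀ a ∈ S, (n : ℝ) • a ∈ S := by
    intro n
    induction n with
    | zero => intro a ha; simpa using h0
    | succ k ih =>
      intro a ha
      have := hadd _ (ih a ha) a ha
      rwa [Nat.cast_succ, add_smul, one_smul]
  have hsmul01 : ∀ (c : ℝ), 0 ≤ c → c ≤ 1 → ∀ a ∈ S, c • a ∈ S := by
    intro c hc0 hc1 a ha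
    have := hconv ha h0 hc0 (by linarith : (0:ℝ) ≤ 1 - c) (by ring : c + (1 - c) = 1)
    simpa using this
  have hsmulpos : ∀ (c : ℝ), 0 ≤ c → ∀ a ∈ S, c • a ∈ S := by
    intro c hc0 a ha
    set n : ℕ := ⌈c⌉₊ with hn
    rcases eq_or_lt_of_le hc0 with h | h
    · simpa [← h] using h0
    · have hnpos : 0 < (n : ℝ) := by
        have : 0 < n := Nat.ceil_pos.2 h
        exact_mod_cast this
      have hcle : c ≤ (n : ℝ) := Nat.le_ceil c
      have h1 : (c / n) • ((n : ℝ) • a) ∈ S := by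
        apply hsmul01 _ (by positivity) (by rw [div_le_one hnpos]; exact hcle)
        exact hnsmul n a ha
      rwa [smul_smul, div_mul_cancel₀ _ (ne_of_gt hnpos)] at h1
  have hsmul : ∀ (c : ℝ), ∀ a ∈ S, c • a ∈ S := by
    intro c a ha
    rcases le_or_gt 0 c with h | h
    · exact hsmulpos c h a ha
    · have := hneg _ (hsmulpos (-c) (by linarith) a ha)
      rwa [← neg_smul, neg_neg] at this
  intro v hv
  induction hv using Submodule.span_induction with
  | mem g hg => exact hGS hg
  | zero => exact h0
  | add a b _ _ ha hb => exact hadd a ha b hb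
  | smul c a _ ha => exact hsmul c a ha

/-- If `P` is a convex body, `Λ₁` a full-rank lattice in `V₁`, `x ∈ π(P)` for the
projection `π` onto `V₂` along `V₁`, and `P + Λ₁` is convex, then the whole
affine subspace `x + V₁` lies in `P + Λ₁`. -/
theorem stmt12 (d : ℕ)
    (V₁ V₂ : Submodule ℝ (EuclideanSpace ℝ (Fin d)))
    (hcompl : IsCompl V₂ V₁)
    (P : Set (EuclideanSpace ℝ (Fin d)))
    (hPc : IsCompact P) (hPconv : Convex ℝ P) (hPint : (interior P).Nonempty)
    (Λ₁ : AddSubgroup (EuclideanSpace ℝ (Fin d)))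
    (hΛsub : (Λ₁ : Set (EuclideanSpace ℝ (Fin d))) ⊆ (V₁ : Set (EuclideanSpace ℝ (Fin d))))
    (hdisc : DiscreteTopology Λ₁)
    (hfull : Submodule.span ℝ (Λ₁ : Set (EuclideanSpace ℝ (Fin d))) = V₁)
    (hconv : Convex ℝ (P + (Λ₁ : Set (EuclideanSpace ℝ (Fin d)))))
    (x : EuclideanSpace ℝ (Fin d))
    (hx : x ∈ (fun p => ((Submodule.linearProjOfIsCompl V₂ V₁ hcompl) p :
      EuclideanSpace ℝ (Fin d))) '' P) :
    ∀ v ∈ V₁, x + v ∈ P + (Λ₁ : Set (EuclideanSpace ℝ (Fin d))) := by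
  intro v hv
  obtain ⟨p, hp, hpx⟩ := hx
  -- p - x ∈ V₁
  have hpxV : p - x ∈ V₁ := by
    have : (Submodule.linearProjOfIsCompl V₂ V₁ hcompl) (p - x) = 0 := by
      rw [map_sub, ← hpx]; erw [Submodule.projectionOnto_apply_left, sub_self]
    exact (Submodule.linearProjOfIsCompl_apply_eq_zero_iff hcompl).1 this
  set w := v - (p - x) with hw
  have hwV : w ∈ V₁ := V₁.sub_mem hv hpxV
  have hwhull : w ∈ convexHull ℝ (Λ₁ : Set (EuclideanSpace ℝ (Fin d))) := by
    apply span_subset_convexHull_of_addSubgroup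
    rw [hfull]; exact hwV
  have key : x + v ∈ convexHull ℝ (P + (Λ₁ : Set (EuclideanSpace ℝ (Fin d)))) := by
    rw [convexHull_add]
    have : x + v = p + w := by rw [hw]; abel
    rw [this]
    exact Set.add_mem_add (subset_convexHull ℝ _ hp) hwhull
  rwa [hconv.convexHull_eq] at key
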